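/- Let f : ℝ → ℝ be a returning function with closed graph whose set C(f) of continuity points is not all of ℝ, and let C be a connected component of C(f). Then the restriction of f to the closure of C in ℝ is continuous. -/

import Mathlib

open Set Filter Topology


/-- A function `f : X → ℝ` is *returning* if for every point `x` there is a positive
real `M` such that for every path-connected subset `C ⊆ X` containing `x` and every
`y ∈ C \ {x}` there exists `z ∈ C \ {x, y}` with `|f z| ≤ max M |f y|`. -/
def Returning {X : Type*} [TopologicalSpace X] (f : X → ℝ) : Prop :=
  ∀ x : X, ∃ M : ℝ, 0 < M ∧ ∀ C : Set X, IsPathConnected C → x ∈ C →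
    ∀ y ∈ C \ {x}, ∃ z ∈ C \ ({x, y} : Set X), |f z| ≤ max M |f y|


lemma cwa (f : ℝ → ℝ) (hgr : IsClosed {p : ℝ × ℝ | p.2 = f p.1}) (b K : ℝ) (s : Set ℝ)
    (hb : ∀ t ∈ s, |f t| ≤ K) : ContinuousWithinAt f s b := by
  unfold ContinuousWithinAt
  by_contra h
  rw [Metric.tendsto_nhds] at h
  push_neg at h
  obtain ⟨ε, hε, hfreq⟩ := h
  set l' := (𝓝[s] b) ⊓ 𝓟 {t | ε ≤ dist (f t) (f b)} with hl'def
  have hl' : l'.NeBot := frequently_iff_neBot.mp hfreq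
  have hsl : s ∈ l' := Filter.mem_inf_of_left self_mem_nhdsWithin
  have hdl : {t | ε ≤ dist (f t) (f b)} ∈ l' := Filter.mem_inf_of_right (mem_principal_self _)
  have hcomp : IsCompact (Icc (-K) K ∩ {y | ε ≤ dist y (f b)}) :=
    isCompact_Icc.inter_right (isClosed_le continuous_const (continuous_id.dist continuous_const))
  have hmap : Filter.map f l' ≤ 𝓟 (Icc (-K) K ∩ {y | ε ≤ dist y (f b)}) := by
    rw [le_principal_iff, mem_map]
    filter_upwards [hsl, hdl] with t hts htd
    exact ⟨abs_le.mp (hb t hts), htd⟩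
  obtain ⟨L, hL, hcl⟩ := hcomp.exists_clusterPt hmap
  have hLgr : (b, L) ∈ closure {p : ℝ × ℝ | p.2 = f p.1} := by
    rw [mem_closure_iff_nhds]
    intro V hV
    rw [mem_nhds_prod_iff] at hV
    obtain ⟨V₁, hV₁, V₂, hV₂, hVsub⟩ := hV
    have hV₁l' : V₁ ∈ l' := Filter.mem_inf_of_left (nhdsWithin_le_nhds hV₁)
    have := clusterPt_iff_nonempty.mp hcl hV₂ (Filter.image_mem_map hV₁l')
    obtain ⟨y, hy₂, t, htV₁, hty⟩ := this
    exact ⟨(t, f t), hVsub ⟨htV₁, hty ▸ hy₂⟩, rfl⟩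
  rw [hgr.closure_eq] at hLgr
  have : L = f b := hLgr
  have : ε ≤ dist L (f b) := hL.2
  rw [‹L = f b›, dist_self] at this
  linarith

lemma isOpen_contSet (f : ℝ → ℝ) (hgr : IsClosed {p : ℝ × ℝ | p.2 = f p.1}) :
    IsOpen {x : ℝ | ContinuousAt f x} := by
  rw [isOpen_iff_mem_nhds]
  intro x hx
  obtain ⟨δ, hδ, hball⟩ := Metric.continuousAt_iff.mp hx 1 one_pos
  have hbd : ∀ t ∈ Metric.ball x δ, |f t| ≤ |f x| + 1 := by
    intro t ht
    have := hball (Metric.mem_ball.mp ht)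
    rw [Real.dist_eq] at this
    have := abs_sub_abs_le_abs_sub (f t) (f x)
    linarith
  refine Filter.mem_of_superset (Metric.ball_mem_nhds x hδ) ?_
  intro y hy
  exact (cwa f hgr y (|f x| + 1) _ hbd).continuousAt (Metric.isOpen_ball.mem_nhds hy)

lemma returning_neg (f : ℝ → ℝ) (hret : Returning f) : Returning (fun t => f (-t)) := by
  intro x
  obtain ⟨M, hM, hr⟩ := hret (-x)
  refine ⟨M, hM, ?_⟩
  intro C hC hxC y hy
  have h1 : IsPathConnected (Neg.neg '' C) := hC.image continuous_neg
  have h2 : (-x) ∈ Neg.neg '' C := ⟨x, hxC, rfl⟩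
  have h3 : (-y) ∈ Neg.neg '' C \ {-x} := by
    refine ⟨⟨y, hy.1, rfl⟩, ?_⟩
    simp only [mem_singleton_iff, neg_inj]
    exact hy.2
  obtain ⟨z, hz, hle⟩ := hr (Neg.neg '' C) h1 h2 (-y) h3
  obtain ⟨⟨w, hwC, hwz⟩, hzne⟩ := hz
  simp only [mem_insert_iff, mem_singleton_iff, not_or] at hzne
  refine ⟨w, ⟨hwC, ?_⟩, ?_⟩
  · simp only [mem_insert_iff, mem_singleton_iff, not_or]
    constructor
    · rintro rfl; exact hzne.1 hwz.symm
    · rintro rfl; exact hzne.2 hwz.symm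
  · have hzw : z = -w := hwz.symm
    rw [hzw] at hle
    simpa [neg_neg] using hle

lemma graph_neg (f : ℝ → ℝ) (hgr : IsClosed {p : ℝ × ℝ | p.2 = f p.1}) :
    IsClosed {p : ℝ × ℝ | p.2 = f (-p.1)} := by
  have : {p : ℝ × ℝ | p.2 = f (-p.1)} =
      (fun p : ℝ × ℝ => (-p.1, p.2)) ⁻¹' {p : ℝ × ℝ | p.2 = f p.1} := rfl
  rw [this]
  exact hgr.preimage ((continuous_fst.neg).prodMk continuous_snd)

lemma endpoint (f : ℝ → ℝ) (hret : Returning f)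
    (hgr : IsClosed {p : ℝ × ℝ | p.2 = f p.1}) (u b : ℝ) (hub : u < b)
    (hcont : ∀ t ∈ Set.Ioo u b, ContinuousAt f t) :
    ∃ c ∈ Set.Ico u b, ∃ K, ∀ t ∈ Set.Ioo c b, |f t| ≤ K := by
  by_contra hcon
  push_neg at hcon
  -- hcon : ∀ c ∈ Ico u b, ∀ K, ∃ t ∈ Ioo c b, K < |f t|
  obtain ⟨M, hM, hretb⟩ := hret b
  by_cases hdiv : ∀ K, ∃ c ∈ Set.Ico u b, ∀ t ∈ Set.Ioo c b, K < |f t|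
  · -- |f| → ∞ near b⁻ : contradiction via returning
    obtain ⟨c, hc, hcM⟩ := hdiv M
    set c₁ := (c + b) / 2 with hc₁def
    have hcc₁ : c < c₁ := by simp only [hc₁def]; linarith [hc.2]
    have hc₁b : c₁ < b := by simp only [hc₁def]; linarith [hc.2]
    obtain ⟨c₂', hc₂', hc₂M⟩ := hdiv (|f c₁|)
    set c₂ := max c₁ c₂' with hc₂def
    have hc₁c₂ : c₁ ≤ c₂ := le_max_left _ _
    have hc₂b : c₂ < b := max_lt hc₁b hc₂'.2
    have hsub : Set.Icc c₁ c₂ ⊆ Set.Ioo u b := fun t ht =>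
      ⟨lt_of_le_of_lt hc.1 (lt_of_lt_of_le hcc₁ ht.1), lt_of_le_of_lt ht.2 hc₂b⟩
    have hcontIcc : ContinuousOn (fun t => |f t|) (Set.Icc c₁ c₂) := fun t ht =>
      ((hcont t (hsub ht)).abs).continuousWithinAt
    obtain ⟨y₀, hy₀mem, hy₀min⟩ :=
      isCompact_Icc.exists_isMinOn (Set.nonempty_Icc.mpr hc₁c₂) hcontIcc
    set m := |f y₀| with hmdef
    set A := {t | t ∈ Set.Icc c₁ c₂ ∧ |f t| = m} with hAdef
    have hAne : A.Nonempty := ⟨y₀, hy₀mem, rfl⟩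
    have hAbdd : BddAbove A := BddAbove.mono (fun t ht => ht.1) (bddAbove_Icc)
    set y := sSup A with hydef
    have hyclos : y ∈ closure A := csSup_mem_closure hAne hAbdd
    have hyIcc : y ∈ Set.Icc c₁ c₂ :=
      closure_minimal (fun t ht => ht.1) isClosed_Icc hyclos
    have hycont : ContinuousAt f y := hcont y (hsub hyIcc)
    have hfy : |f y| = m := by
      have h1 : Tendsto (fun t => |f t|) (𝓝[A] y) (𝓝 (|f y|)) :=
        (hycont.abs).continuousWithinAt
      have h2 : Tendsto (fun t => |f t|) (𝓝[A] y) (𝓝 m) := by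
        refine Filter.Tendsto.congr' ?_ tendsto_const_nhds
        filter_upwards [self_mem_nhdsWithin] with t ht
        exact ht.2.symm
      have : NeBot (𝓝[A] y) := mem_closure_iff_nhdsWithin_neBot.mp hyclos
      exact tendsto_nhds_unique h1 h2
    have hstrict : ∀ t ∈ Set.Ioo y b, m < |f t| := by
      intro t ht
      by_cases htc₂ : t ≤ c₂
      · have htIcc : t ∈ Set.Icc c₁ c₂ := ⟨le_trans hyIcc.1 ht.1.le, htc₂⟩
        have hge : m ≤ |f t| := hy₀min htIcc
        rcases lt_or_eq_of_le hge with h | h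
        · exact h
        · exfalso
          have : t ∈ A := ⟨htIcc, h.symm⟩
          have : t ≤ y := le_csSup hAbdd this
          exact absurd ht.1 (not_lt.mpr this)
      · push_neg at htc₂
        have : |f c₁| < |f t| :=
          hc₂M t ⟨lt_of_le_of_lt (le_max_right c₁ c₂') htc₂, ht.2⟩
        have hmc₁ : m ≤ |f c₁| := hy₀min (Set.left_mem_Icc.mpr hc₁c₂)
        linarith
    have hyb : y < b := lt_of_le_of_lt hyIcc.2 hc₂b
    have hmM : M < m := by
      have : y ∈ Set.Ioo c b := ⟨lt_of_lt_of_le hcc₁ hyIcc.1, hyb⟩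
      have := hcM y this
      rwa [hfy] at this
    -- apply returning at b with C = [y, b]
    have hpath : IsPathConnected (Set.Icc y b) :=
      (convex_Icc y b).isPathConnected (Set.nonempty_Icc.mpr hyb.le)
    have hbmem : b ∈ Set.Icc y b := Set.right_mem_Icc.mpr hyb.le
    have hymem : y ∈ Set.Icc y b \ {b} :=
      ⟨Set.left_mem_Icc.mpr hyb.le, by simp [ne_of_lt hyb]⟩
    obtain ⟨z, hz, hzle⟩ := hretb (Set.Icc y b) hpath hbmem y hymem
    obtain ⟨hzIcc, hzne⟩ := hz
    simp only [Set.mem_insert_iff, Set.mem_singleton_iff, not_or] at hzne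
    have hzIoo : z ∈ Set.Ioo y b :=
      ⟨lt_of_le_of_ne hzIcc.1 (Ne.symm hzne.2), lt_of_le_of_ne hzIcc.2 hzne.1⟩
    have h1 : m < |f z| := hstrict z hzIoo
    have h2 : |f z| ≤ m := by
      rw [hfy] at hzle
      rwa [max_eq_right hmM.le] at hzle
    linarith
  · push_neg at hdiv
    -- hdiv : ∀ c ∈ Ico u b, ∃ t ∈ Ioo c b, |f t| ≤ K₀  (for some K₀)
    obtain ⟨K₀, hK₀⟩ := hdiv
    set K₁ := max K₀ (|f b|) + 1 with hK₁def
    set S := {t | t ∈ Set.Ioo u b ∧ |f t| = K₁} with hSdef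
    have hbS : b ∈ closure S := by
      rw [Metric.mem_closure_iff]
      intro δ hδ
      set c := max u (b - δ / 2) with hcdef
      have hcb : c < b := max_lt hub (by linarith)
      have hcIco : c ∈ Set.Ico u b := ⟨le_max_left _ _, hcb⟩
      obtain ⟨t₁, ht₁, ht₁K⟩ := hK₀ c hcIco
      obtain ⟨t₂, ht₂, ht₂K⟩ := hcon c hcIco K₁
      have ht₁K₁ : |f t₁| < K₁ := by
        have := le_max_left K₀ (|f b|); simp only [hK₁def]; linarith
      have huIcc : Set.uIcc t₁ t₂ ⊆ Set.Ioo c b :=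
        (Set.ordConnected_Ioo).uIcc_subset ht₁ ht₂
      have hIoosub : Set.Ioo c b ⊆ Set.Ioo u b := fun t ht =>
        ⟨lt_of_le_of_lt (le_max_left u _) ht.1, ht.2⟩
      have hcontu : ContinuousOn (fun t => |f t|) (Set.uIcc t₁ t₂) := fun t ht =>
        ((hcont t (hIoosub (huIcc ht))).abs).continuousWithinAt
      have hK₁mem : K₁ ∈ Set.uIcc (|f t₁|) (|f t₂|) :=
        Set.mem_uIcc.mpr (Or.inl ⟨ht₁K₁.le, ht₂K.le⟩)
      obtain ⟨z, hzu, hzK⟩ := intermediate_value_uIcc hcontu hK₁mem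
      have hzIoo : z ∈ Set.Ioo c b := huIcc hzu
      refine ⟨z, ⟨hIoosub hzIoo, hzK⟩, ?_⟩
      have : b - δ / 2 ≤ c := le_max_right _ _
      rw [Real.dist_eq, abs_of_pos (by linarith [hzIoo.2] : (0:ℝ) < b - z)]
      linarith [hzIoo.1]
    have hScwa : ContinuousWithinAt f S b := cwa f hgr b K₁ S (fun t ht => ht.2.le)
    have hne : NeBot (𝓝[S] b) := mem_closure_iff_nhdsWithin_neBot.mp hbS
    have h1 : Tendsto (fun t => |f t|) (𝓝[S] b) (𝓝 (|f b|)) := hScwa.abs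
    have h2 : Tendsto (fun t => |f t|) (𝓝[S] b) (𝓝 K₁) := by
      refine Filter.Tendsto.congr' ?_ tendsto_const_nhds
      filter_upwards [self_mem_nhdsWithin] with t ht
      exact ht.2.symm
    have hfbK : |f b| = K₁ := tendsto_nhds_unique h1 h2
    have : |f b| ≤ max K₀ (|f b|) := le_max_right _ _
    simp only [hK₁def] at hfbK
    linarith

theorem stmt_5 (f : ℝ → ℝ) (hret : Returning f)
    (hgr : IsClosed {p : ℝ × ℝ | p.2 = f p.1})
    (hne : {x : ℝ | ContinuousAt f x} ≠ Set.univ)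
    (x : ℝ) (hx : ContinuousAt f x) :
    ContinuousOn f (closure (connectedComponentIn {x : ℝ | ContinuousAt f x} x)) := by
  set D := {x : ℝ | ContinuousAt f x} with hDdef
  have hD : IsOpen D := isOpen_contSet f hgr
  have hxD : x ∈ D := hx
  set C := connectedComponentIn D x with hCdef
  have hCsub : C ⊆ D := connectedComponentIn_subset _ _
  have hCconn : IsConnected C := (isConnected_connectedComponentIn_iff).mpr hxD
  have hCord : OrdConnected C := hCconn.isPreconnected.ordConnected
  intro b hb
  by_cases hbD : b ∈ D
  · exact (hbD : ContinuousAt f b).continuousWithinAt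
  have hbC : b ∉ C := fun h => hbD (hCsub h)
  have hside : C ⊆ Iio b ∨ C ⊆ Ioi b := by
    by_contra h
    push_neg at h
    obtain ⟨u, huC, hu⟩ := Set.not_subset.mp h.1
    obtain ⟨v, hvC, hv⟩ := Set.not_subset.mp h.2
    simp only [Set.mem_Iio, not_lt] at hu
    simp only [Set.mem_Ioi, not_lt] at hv
    exact hbC (hCord.out hvC huC ⟨hv, hu⟩)
  rcases hside with hL | hR
  · -- b is a right endpoint
    obtain ⟨u, huC⟩ := hCconn.nonempty
    have hu : u < b := hL huC
    have hIoo : Set.Ioo u b ⊆ C := by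
      intro t ht
      obtain ⟨v, hvo, hvC⟩ := mem_closure_iff.mp hb (Set.Ioi t) isOpen_Ioi ht.2
      exact hCord.out huC hvC ⟨ht.1.le, (Set.mem_Ioi.mp hvo).le⟩
    obtain ⟨c, hcIco, K, hK⟩ :=
      endpoint f hret hgr u b hu (fun t ht => hCsub (hIoo ht))
    have hclos : closure C ⊆ Set.Iic b :=
      closure_minimal (fun t ht => Set.mem_Iic.mpr (hL ht).le) isClosed_Iic
    have hbound : ∀ t ∈ closure C ∩ Set.Ioi c, |f t| ≤ max K (|f b|) := by
      rintro t ⟨ht1, ht2⟩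
      rcases eq_or_lt_of_le (Set.mem_Iic.mp (hclos ht1)) with h | h
      · rw [h]; exact le_max_right _ _
      · exact le_trans (hK t ⟨ht2, h⟩) (le_max_left _ _)
    have hcw := cwa f hgr b (max K (|f b|)) _ hbound
    exact hcw.mono_of_mem_nhdsWithin
      (inter_mem self_mem_nhdsWithin
        (mem_nhdsWithin_of_mem_nhds (Ioi_mem_nhds hcIco.2)))
  · -- b is a left endpoint; reflect
    obtain ⟨u, huC⟩ := hCconn.nonempty
    have hu : b < u := hR huC
    have hIoo : Set.Ioo b u ⊆ C := by
      intro t ht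
      obtain ⟨v, hvo, hvC⟩ := mem_closure_iff.mp hb (Set.Iio t) isOpen_Iio ht.1
      exact hCord.out hvC huC ⟨(Set.mem_Iio.mp hvo).le, ht.2.le⟩
    have hcont' : ∀ t ∈ Set.Ioo (-u) (-b), ContinuousAt (fun s => f (-s)) t := by
      intro t ht
      have hmem : -t ∈ Set.Ioo b u := ⟨by linarith [ht.2], by linarith [ht.1]⟩
      have : ContinuousAt f (-t) := hCsub (hIoo hmem)
      exact this.comp continuous_neg.continuousAt
    obtain ⟨c, hcIco, K, hK⟩ :=
      endpoint (fun s => f (-s)) (returning_neg f hret) (graph_neg f hgr)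
        (-u) (-b) (by linarith) hcont'
    have hbc : b < -c := by linarith [hcIco.2]
    have hK' : ∀ s ∈ Set.Ioo b (-c), |f s| ≤ K := by
      intro s hs
      have := hK (-s) ⟨by linarith [hs.2], by linarith [hs.1]⟩
      simpa using this
    have hclos : closure C ⊆ Set.Ici b :=
      closure_minimal (fun t ht => Set.mem_Ici.mpr (hR ht).le) isClosed_Ici
    have hbound : ∀ t ∈ closure C ∩ Set.Iio (-c), |f t| ≤ max K (|f b|) := by
      rintro t ⟨ht1, ht2⟩
      rcases eq_or_lt_of_le (Set.mem_Iic.mp (hclos ht1)) with h | h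
      · rw [← h]; exact le_max_right _ _
      · exact le_trans (hK' t ⟨h, ht2⟩) (le_max_left _ _)
    have hcw := cwa f hgr b (max K (|f b|)) _ hbound
    exact hcw.mono_of_mem_nhdsWithin
      (inter_mem self_mem_nhdsWithin
        (mem_nhdsWithin_of_mem_nhds (Iio_mem_nhds hbc)))
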